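/- If G is a K_{r+1}-free graph on n vertices in which every vertex has degree greater than (3r-4)/(3r-1)·n, then G is r-colourable. -/

import Mathlib

open Finset SimpleGraph

variable {n r : ℕ} {H : SimpleGraph (Fin n)}

/-- A clique `t` in a `K_{r+1}`-free graph has at most `r` vertices. -/
lemma AES.clique_card_le (hfree : H.CliqueFree (r + 1)) {t : Finset (Fin n)}
    (ht : H.IsClique t) : t.card ≤ r := by
  by_contra h
  push_neg at h
  obtain ⟨u, hu, hcard⟩ := Finset.exists_subset_card_eq h
  exact hfree u ⟨ht.subset hu, hcard⟩

/-- A `K_{r+1}`-free graph whose non-adjacency relation is transitive is `r`-colourable. -/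
lemma AES.colorable_of_transitive (hfree : H.CliqueFree (r + 1))
    (hT : Transitive fun x y : Fin n => ¬H.Adj x y) : H.Colorable r := by
  classical
  let st : Setoid (Fin n) := ⟨fun x y => ¬H.Adj x y,
    ⟨fun x => H.loopless.irrefl x, fun {x y} h => fun h' => h (h'.symm), fun {x y z} h h' => hT h h'⟩⟩
  letI : DecidableRel st.r := fun a b => Classical.dec _
  have C : H.Coloring (Quotient st) := Coloring.mk (Quotient.mk st) (by
    intro a b hab h
    exact (Quotient.eq.mp h) hab)
  have hcard : Fintype.card (Quotient st) ≤ r := by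
    have hinj : Function.Injective (Quotient.out : Quotient st → Fin n) := by
      intro a b h
      rw [← Quotient.out_eq a, ← Quotient.out_eq b, h]
    have hcl : H.IsClique (Finset.univ.image (Quotient.out : Quotient st → Fin n)) := by
      intro x hx y hy hxy
      simp only [Finset.coe_image, Set.mem_image, Finset.coe_univ, Set.image_univ,
        Set.mem_range] at hx hy
      obtain ⟨a, rfl⟩ := hx
      obtain ⟨b, rfl⟩ := hy
      by_contra hadj
      exact hxy (by rw [← Quotient.out_eq a, ← Quotient.out_eq b, Quotient.sound hadj])
    have := AES.clique_card_le hfree hcl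
    rwa [Finset.card_image_of_injective _ hinj, Finset.card_univ] at this
  exact (C.colorable).mono hcard

/-- In a maximally `K_{r+1}`-free graph, any two distinct non-adjacent vertices have a common
`(r-1)`-set completing each of them to an `r`-clique. -/
lemma AES.exists_clique_of_maximal (hm : Maximal (fun K : SimpleGraph (Fin n) => K.CliqueFree (r + 1)) H)
    {x y : Fin n} (hxy : ¬H.Adj x y) (hne : x ≠ y) :
    ∃ s : Finset (Fin n), x ∉ s ∧ y ∉ s ∧ H.IsNClique r (insert x s) ∧ H.IsNClique r (insert y s) := by
  classical
  have hncf : ¬(H ⊔ edge x y).CliqueFree (r + 1) := by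
    intro hcf
    have hle : H ⊔ edge x y ≤ H := hm.2 hcf le_sup_left
    exact hxy (hle (sup_adj _ _ _ _ |>.mpr (Or.inr ((edge_adj x y x y).mpr ⟨Or.inl ⟨rfl, rfl⟩, hne⟩))))
  rw [CliqueFree] at hncf
  push_neg at hncf
  obtain ⟨t, ht⟩ := hncf
  -- x and y both belong to t
  have hxt : x ∈ t ∧ y ∈ t := by
    by_contra hc
    refine hm.1 t ⟨?_, ht.2⟩
    intro a ha b hb hab
    have := ht.1 ha hb hab
    rw [sup_adj, edge_adj] at this
    rcases this with h | ⟨h, _⟩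
    · exact h
    · exfalso
      rcases h with ⟨rfl, rfl⟩ | ⟨rfl, rfl⟩
      · exact hc ⟨ha, hb⟩
      · exact hc ⟨hb, ha⟩
  obtain ⟨hxt, hyt⟩ := hxt
  refine ⟨(t.erase x).erase y, fun h => (Finset.mem_erase.mp ((Finset.erase_subset _ _) h)).1 rfl,
    fun h => (Finset.mem_erase.mp h).1 rfl, ?_, ?_⟩
  · have hadj : ∀ z ∈ (t.erase x).erase y, H.Adj x z := by
      intro z hz
      have hzy : z ≠ y := (Finset.mem_erase.mp hz).1
      have hzx : z ≠ x := (Finset.mem_erase.mp (Finset.mem_erase.mp hz).2).1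
      have hzt : z ∈ t := (Finset.mem_erase.mp (Finset.mem_erase.mp hz).2).2
      have := ht.1 hxt hzt (fun h => hzx h.symm)
      rw [sup_adj, edge_adj] at this
      rcases this with h | ⟨h, _⟩
      · exact h
      · exfalso
        rcases h with ⟨_, h2⟩ | ⟨h1, _⟩
        · exact hzy h2
        · exact hne h1
    have hcl : H.IsClique ((t.erase x).erase y) := by
      intro a ha b hb hab
      have hat : (a : Fin n) ∈ t := (Finset.mem_erase.mp (Finset.mem_erase.mp ha).2).2
      have hbt : (b : Fin n) ∈ t := (Finset.mem_erase.mp (Finset.mem_erase.mp hb).2).2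
      have := ht.1 hat hbt hab
      rw [sup_adj, edge_adj] at this
      rcases this with h | ⟨h, _⟩
      · exact h
      · exfalso
        rcases h with ⟨rfl, rfl⟩ | ⟨rfl, rfl⟩
        · exact (Finset.mem_erase.mp (Finset.mem_erase.mp ha).2).1 rfl
        · exact (Finset.mem_erase.mp ha).1 rfl
    have hcard : ((t.erase x).erase y).card = r - 1 := by
      rw [Finset.card_erase_of_mem (Finset.mem_erase.mpr ⟨hne.symm, hyt⟩),
        Finset.card_erase_of_mem hxt, ht.2]
      omega
    have hr1 : 1 ≤ r := by
      have h2 : 1 < t.card := Finset.one_lt_card.mpr ⟨x, hxt, y, hyt, hne⟩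
      have h3 := ht.2
      omega
    have hxs : x ∉ (t.erase x).erase y := fun h => (Finset.mem_erase.mp ((Finset.erase_subset _ _) h)).1 rfl
    exact ⟨by rw [Finset.coe_insert]; exact hcl.insert (fun b hb _ => hadj b hb),
      by rw [Finset.card_insert_of_notMem hxs, hcard]; omega⟩
  · have hadj : ∀ z ∈ (t.erase x).erase y, H.Adj y z := by
      intro z hz
      have hzy : z ≠ y := (Finset.mem_erase.mp hz).1
      have hzx : z ≠ x := (Finset.mem_erase.mp (Finset.mem_erase.mp hz).2).1
      have hzt : z ∈ t := (Finset.mem_erase.mp (Finset.mem_erase.mp hz).2).2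
      have := ht.1 hyt hzt (fun h => hzy h.symm)
      rw [sup_adj, edge_adj] at this
      rcases this with h | ⟨h, _⟩
      · exact h
      · exfalso
        rcases h with ⟨h1, _⟩ | ⟨_, h2⟩
        · exact hne h1.symm
        · exact hzx h2
    have hcl : H.IsClique ((t.erase x).erase y) := by
      intro a ha b hb hab
      have hat : (a : Fin n) ∈ t := (Finset.mem_erase.mp (Finset.mem_erase.mp ha).2).2
      have hbt : (b : Fin n) ∈ t := (Finset.mem_erase.mp (Finset.mem_erase.mp hb).2).2
      have := ht.1 hat hbt hab
      rw [sup_adj, edge_adj] at this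
      rcases this with h | ⟨h, _⟩
      · exact h
      · exfalso
        rcases h with ⟨rfl, rfl⟩ | ⟨rfl, rfl⟩
        · exact (Finset.mem_erase.mp (Finset.mem_erase.mp ha).2).1 rfl
        · exact (Finset.mem_erase.mp ha).1 rfl
    have hcard : ((t.erase x).erase y).card = r - 1 := by
      rw [Finset.card_erase_of_mem (Finset.mem_erase.mpr ⟨hne.symm, hyt⟩),
        Finset.card_erase_of_mem hxt, ht.2]
      omega
    have hr1 : 1 ≤ r := by
      have h2 : 1 < t.card := Finset.one_lt_card.mpr ⟨x, hxt, y, hyt, hne⟩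
      have h3 := ht.2
      omega
    have hys : y ∉ (t.erase x).erase y := fun h => (Finset.mem_erase.mp h).1 rfl
    exact ⟨by rw [Finset.coe_insert]; exact hcl.insert (fun b hb _ => hadj b hb),
      by rw [Finset.card_insert_of_notMem hys, hcard]; omega⟩

/-- A five-wheel-like configuration in `H`. -/
structure AES.IsWheel (H : SimpleGraph (Fin n)) (r : ℕ) (v w₁ w₂ : Fin n)
    (s₁ s₂ : Finset (Fin n)) : Prop where
  adj : H.Adj w₁ w₂
  nadj₁ : ¬H.Adj v w₁
  nadj₂ : ¬H.Adj v w₂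
  hv1 : v ∉ s₁
  hv2 : v ∉ s₂
  hw1 : w₁ ∉ s₁
  hw2 : w₂ ∉ s₂
  c1v : H.IsNClique r (insert v s₁)
  c1w : H.IsNClique r (insert w₁ s₁)
  c2v : H.IsNClique r (insert v s₂)
  c2w : H.IsNClique r (insert w₂ s₂)

namespace AES.IsWheel

variable {v w₁ w₂ : Fin n} {s₁ s₂ : Finset (Fin n)}

lemma card₁ (W : AES.IsWheel H r v w₁ w₂ s₁ s₂) : s₁.card + 1 = r := by
  have := W.c1v.2
  rwa [Finset.card_insert_of_notMem W.hv1] at this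

lemma card₂ (W : AES.IsWheel H r v w₁ w₂ s₁ s₂) : s₂.card + 1 = r := by
  have := W.c2v.2
  rwa [Finset.card_insert_of_notMem W.hv2] at this

lemma clique₁ (W : AES.IsWheel H r v w₁ w₂ s₁ s₂) : H.IsClique s₁ :=
  W.c1v.1.subset (by rw [Finset.coe_insert]; exact Set.subset_insert _ _)

lemma clique₂ (W : AES.IsWheel H r v w₁ w₂ s₁ s₂) : H.IsClique s₂ :=
  W.c2v.1.subset (by rw [Finset.coe_insert]; exact Set.subset_insert _ _)

lemma adj_insert {u : Fin n} {s : Finset (Fin n)} (hc : H.IsClique (insert u s : Finset (Fin n)))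
    (hu : u ∉ s) : ∀ x ∈ s, H.Adj u x := fun x hx =>
  hc (Finset.mem_coe.mpr (Finset.mem_insert_self _ _))
    (Finset.mem_coe.mpr (Finset.mem_insert_of_mem hx)) (fun h => hu (h ▸ hx))

lemma adj_v₁ (W : AES.IsWheel H r v w₁ w₂ s₁ s₂) : ∀ x ∈ s₁, H.Adj v x :=
  adj_insert W.c1v.1 W.hv1

lemma adj_v₂ (W : AES.IsWheel H r v w₁ w₂ s₁ s₂) : ∀ x ∈ s₂, H.Adj v x :=
  adj_insert W.c2v.1 W.hv2

lemma adj_w₁ (W : AES.IsWheel H r v w₁ w₂ s₁ s₂) : ∀ x ∈ s₁, H.Adj w₁ x :=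
  adj_insert W.c1w.1 W.hw1

lemma adj_w₂ (W : AES.IsWheel H r v w₁ w₂ s₁ s₂) : ∀ x ∈ s₂, H.Adj w₂ x :=
  adj_insert W.c2w.1 W.hw2

/-- The intersection of the two cliques has at most `r - 2` elements. -/
lemma inter_card_le (W : AES.IsWheel H r v w₁ w₂ s₁ s₂) (hfree : H.CliqueFree (r + 1)) :
    (s₁ ∩ s₂).card + 2 ≤ r := by
  classical
  have hw₁ : w₁ ∉ insert w₂ (s₁ ∩ s₂) := by
    simp only [Finset.mem_insert, Finset.mem_inter]
    rintro (rfl | ⟨h1, _⟩)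
    · exact (H.loopless.irrefl _) W.adj
    · exact W.hw1 h1
  have hw₂ : w₂ ∉ s₁ ∩ s₂ := fun h => W.hw2 (Finset.mem_inter.mp h).2
  have hcl : H.IsClique ((insert w₁ (insert w₂ (s₁ ∩ s₂)) : Finset (Fin n))) := by
    intro a ha b hb hab
    simp only [Finset.coe_insert, Set.mem_insert_iff, Finset.mem_coe, Finset.mem_inter] at ha hb
    rcases ha with rfl | rfl | ⟨ha1, ha2⟩
    · rcases hb with rfl | rfl | ⟨hb1, hb2⟩
      · exact absurd rfl hab
      · exact W.adj
      · exact W.adj_w₁ _ hb1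
    · rcases hb with rfl | rfl | ⟨hb1, hb2⟩
      · exact W.adj.symm
      · exact absurd rfl hab
      · exact W.adj_w₂ _ hb2
    · rcases hb with rfl | rfl | ⟨hb1, hb2⟩
      · exact (W.adj_w₁ _ ha1).symm
      · exact (W.adj_w₂ _ ha2).symm
      · exact W.clique₁ (Finset.mem_coe.mpr ha1) (Finset.mem_coe.mpr hb1) hab
  have := AES.clique_card_le hfree hcl
  rw [Finset.card_insert_of_notMem hw₁, Finset.card_insert_of_notMem hw₂] at this
  omega

lemma clique_swap {u y a : Fin n} {s : Finset (Fin n)} (hc : H.IsNClique r (insert u s))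
    (hu : u ∉ s) (ha : a ∈ s) (hyu : H.Adj y u) (hadj : ∀ x ∈ s, x ≠ a → H.Adj y x)
    (hys : y ∉ s.erase a) : H.IsNClique r (insert u (insert y (s.erase a))) := by
  classical
  constructor
  · intro c hc' d hd' hcd
    simp only [Finset.coe_insert, Set.mem_insert_iff, Finset.mem_coe, Finset.mem_erase] at hc' hd'
    have hadj' : ∀ x ∈ s, H.Adj u x := adj_insert hc.1 hu
    rcases hc' with rfl | rfl | ⟨hc1, hc2⟩
    · rcases hd' with rfl | rfl | ⟨hd1, hd2⟩
      · exact absurd rfl hcd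
      · exact hyu.symm
      · exact hadj' _ hd2
    · rcases hd' with rfl | rfl | ⟨hd1, hd2⟩
      · exact hyu
      · exact absurd rfl hcd
      · exact hadj _ hd2 hd1
    · rcases hd' with rfl | rfl | ⟨hd1, hd2⟩
      · exact (hadj' _ hc2).symm
      · exact (hadj _ hc2 hc1).symm
      · exact hc.1 (Finset.mem_coe.mpr (Finset.mem_insert_of_mem hc2))
          (Finset.mem_coe.mpr (Finset.mem_insert_of_mem hd2)) hcd
  · have h1 : u ∉ insert y (s.erase a) := by
      simp only [Finset.mem_insert, Finset.mem_erase]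
      rintro (rfl | ⟨_, h⟩)
      · exact (H.loopless.irrefl _) hyu
      · exact hu h
    have hsc : s.card + 1 = r := by
      have := hc.2
      rwa [Finset.card_insert_of_notMem hu] at this
    have hcs : 1 ≤ s.card := Finset.card_pos.mpr ⟨a, ha⟩
    rw [Finset.card_insert_of_notMem h1, Finset.card_insert_of_notMem hys,
      Finset.card_erase_of_mem ha]
    omega

lemma swap₁ (W : AES.IsWheel H r v w₁ w₂ s₁ s₂) {y a : Fin n} (ha : a ∈ s₁)
    (hyv : H.Adj y v) (hyw : H.Adj y w₁) (hadj : ∀ x ∈ s₁, x ≠ a → H.Adj y x)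
    (hys : y ∉ s₁.erase a) : AES.IsWheel H r v w₁ w₂ (insert y (s₁.erase a)) s₂ where
  adj := W.adj
  nadj₁ := W.nadj₁
  nadj₂ := W.nadj₂
  hv1 := by
    simp only [Finset.mem_insert, Finset.mem_erase]
    rintro (rfl | ⟨_, h⟩)
    · exact (H.loopless.irrefl _) hyv
    · exact W.hv1 h
  hv2 := W.hv2
  hw1 := by
    simp only [Finset.mem_insert, Finset.mem_erase]
    rintro (rfl | ⟨_, h⟩)
    · exact (H.loopless.irrefl _) hyw
    · exact W.hw1 h
  hw2 := W.hw2
  c1v := clique_swap W.c1v W.hv1 ha hyv hadj hys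
  c1w := clique_swap W.c1w W.hw1 ha hyw hadj hys
  c2v := W.c2v
  c2w := W.c2w

lemma swap₂ (W : AES.IsWheel H r v w₁ w₂ s₁ s₂) {y b : Fin n} (hb : b ∈ s₂)
    (hyv : H.Adj y v) (hyw : H.Adj y w₂) (hadj : ∀ x ∈ s₂, x ≠ b → H.Adj y x)
    (hys : y ∉ s₂.erase b) : AES.IsWheel H r v w₁ w₂ s₁ (insert y (s₂.erase b)) where
  adj := W.adj
  nadj₁ := W.nadj₁
  nadj₂ := W.nadj₂
  hv1 := W.hv1
  hv2 := by
    simp only [Finset.mem_insert, Finset.mem_erase]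
    rintro (rfl | ⟨_, h⟩)
    · exact (H.loopless.irrefl _) hyv
    · exact W.hv2 h
  hw1 := W.hw1
  hw2 := by
    simp only [Finset.mem_insert, Finset.mem_erase]
    rintro (rfl | ⟨_, h⟩)
    · exact (H.loopless.irrefl _) hyw
    · exact W.hw2 h
  c1v := W.c1v
  c1w := W.c1w
  c2v := clique_swap W.c2v W.hv2 hb hyv hadj hys
  c2w := clique_swap W.c2w W.hw2 hb hyw hadj hys

end AES.IsWheel

open AES.IsWheel in
lemma AES.key [DecidableRel H.Adj] {v w₁ w₂ : Fin n} {s₁ s₂ : Finset (Fin n)}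
    (hfree : H.CliqueFree (r + 1)) (W : AES.IsWheel H r v w₁ w₂ s₁ s₂)
    (hmax : ∀ s₁' s₂', AES.IsWheel H r v w₁ w₂ s₁' s₂' → (s₁' ∩ s₂').card ≤ (s₁ ∩ s₂).card)
    (y : Fin n) :
    (s₁.filter fun x => H.Adj x y).card + (s₂.filter fun x => H.Adj x y).card
      + ((s₁ ∩ s₂).filter fun x => H.Adj x y).card
      + (if H.Adj v y then 1 else 0) + (if H.Adj w₁ y then 1 else 0)
      + (if H.Adj w₂ y then 1 else 0)
      ≤ s₁.card + s₂.card + (s₁ ∩ s₂).card := by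
  have e₁ := Finset.card_filter_add_card_filter_not (s := s₁) (p := fun x => H.Adj x y)
  have e₂ := Finset.card_filter_add_card_filter_not (s := s₂) (p := fun x => H.Adj x y)
  have e₀ := Finset.card_filter_add_card_filter_not (s := s₁ ∩ s₂)
    (p := fun x => H.Adj x y)
  set m₁ := (s₁.filter fun x => ¬H.Adj x y).card with hm₁def
  set m₂ := (s₂.filter fun x => ¬H.Adj x y).card with hm₂def
  set m₀ := ((s₁ ∩ s₂).filter fun x => ¬H.Adj x y).card with hm₀def
  -- if y is adjacent to `u` and to everything in `s`, where `insert u s` is an `r`-clique,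
  -- we get a `K_{r+1}`
  have key1 : ∀ (u : Fin n) (s : Finset (Fin n)), H.IsNClique r (insert u s) → H.Adj u y →
      (∀ x ∈ s, H.Adj x y) → False := by
    intro u s hc hu hall
    refine hfree _ (hc.insert (a := y) ?_)
    intro b hb
    rcases Finset.mem_insert.mp hb with rfl | hb
    · exact hu.symm
    · exact (hall b hb).symm
  have hall₁ : m₁ = 0 → ∀ x ∈ s₁, H.Adj x y := by
    intro h x hx
    by_contra hc
    exact absurd (Finset.card_eq_zero.mp h) (Finset.ne_empty_of_mem (Finset.mem_filter.mpr ⟨hx, hc⟩))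
  have hall₂ : m₂ = 0 → ∀ x ∈ s₂, H.Adj x y := by
    intro h x hx
    by_contra hc
    exact absurd (Finset.card_eq_zero.mp h) (Finset.ne_empty_of_mem (Finset.mem_filter.mpr ⟨hx, hc⟩))
  by_cases hv : H.Adj v y
  · have hm₁ : 1 ≤ m₁ := by
      rcases Nat.eq_zero_or_pos m₁ with h | h
      · exact absurd (key1 v s₁ W.c1v hv (hall₁ h)) not_false
      · exact h
    have hm₂ : 1 ≤ m₂ := by
      rcases Nat.eq_zero_or_pos m₂ with h | h
      · exact absurd (key1 v s₂ W.c2v hv (hall₂ h)) not_false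
      · exact h
    by_cases hw1 : H.Adj w₁ y
    · by_cases hw2 : H.Adj w₂ y
      · -- the hard case: y adjacent to v, w₁, w₂
        simp only [hv, hw1, hw2, if_pos]
        by_cases hm₀ : 1 ≤ m₀
        · omega
        · by_cases hm₁' : 2 ≤ m₁
          · omega
          · by_cases hm₂' : 2 ≤ m₂
            · omega
            · -- m₁ = m₂ = 1, m₀ = 0 : contradiction with maximality of the wheel
              exfalso
              have hm₁1 : m₁ = 1 := by omega
              have hm₂1 : m₂ = 1 := by omega
              have hm₀0 : m₀ = 0 := by omega
              obtain ⟨a, ha⟩ := Finset.card_eq_one.mp hm₁1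
              obtain ⟨b, hb⟩ := Finset.card_eq_one.mp hm₂1
              have ha₁ : a ∈ s₁ ∧ ¬H.Adj a y := by
                have : a ∈ s₁.filter fun x => ¬H.Adj x y := ha ▸ Finset.mem_singleton_self a
                exact Finset.mem_filter.mp this
              have hb₂ : b ∈ s₂ ∧ ¬H.Adj b y := by
                have : b ∈ s₂.filter fun x => ¬H.Adj x y := hb ▸ Finset.mem_singleton_self b
                exact Finset.mem_filter.mp this
              have hadj₁ : ∀ x ∈ s₁, x ≠ a → H.Adj x y := by
                intro x hx hxa
                by_contra hc
                exact hxa (Finset.mem_singleton.mp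
                  (ha ▸ Finset.mem_filter.mpr ⟨hx, hc⟩))
              have hadj₂ : ∀ x ∈ s₂, x ≠ b → H.Adj x y := by
                intro x hx hxb
                by_contra hc
                exact hxb (Finset.mem_singleton.mp
                  (hb ▸ Finset.mem_filter.mpr ⟨hx, hc⟩))
              have hall₀ : ∀ x ∈ s₁ ∩ s₂, H.Adj x y := by
                intro x hx
                by_contra hc
                exact absurd (Finset.card_eq_zero.mp hm₀0)
                  (Finset.ne_empty_of_mem (Finset.mem_filter.mpr ⟨hx, hc⟩))
              have has₂ : a ∉ s₂ := fun h =>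
                ha₁.2 (hall₀ a (Finset.mem_inter.mpr ⟨ha₁.1, h⟩))
              have hbs₁ : b ∉ s₁ := fun h =>
                hb₂.2 (hall₀ b (Finset.mem_inter.mpr ⟨h, hb₂.1⟩))
              have hys₁ : y ∈ s₁ → y = a := by
                intro h
                by_contra hc
                exact H.loopless.irrefl y (hadj₁ y h hc)
              have hys₂ : y ∈ s₂ → y = b := by
                intro h
                by_contra hc
                exact H.loopless.irrefl y (hadj₂ y h hc)
              have hky : y ∉ s₁ ∩ s₂ := by
                intro h
                exact H.loopless.irrefl y (hall₀ y h)
              by_cases hy₁ : y ∈ s₁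
              · -- y = a : swap in s₂ only
                have hya : y = a := hys₁ hy₁
                have hyn₂ : y ∉ s₂ := hya ▸ has₂
                have W' := W.swap₂ hb₂.1 hv.symm hw2.symm
                  (fun x hx hxb => (hadj₂ x hx hxb).symm)
                  (fun h => hyn₂ (Finset.mem_of_mem_erase h))
                have hcard := hmax _ _ W'
                rw [Finset.inter_insert_of_mem hy₁, Finset.inter_erase,
                  Finset.erase_eq_of_notMem (fun h => hbs₁ (Finset.mem_inter.mp h).1),
                  Finset.card_insert_of_notMem hky] at hcard
                omega
              · by_cases hy₂ : y ∈ s₂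
                · -- y = b : swap in s₁ only
                  have W' := W.swap₁ ha₁.1 hv.symm hw1.symm
                    (fun x hx hxa => (hadj₁ x hx hxa).symm)
                    (fun h => hy₁ (Finset.mem_of_mem_erase h))
                  have hcard := hmax _ _ W'
                  rw [Finset.insert_inter_of_mem hy₂, Finset.erase_inter,
                    Finset.erase_eq_of_notMem (fun h => has₂ (Finset.mem_inter.mp h).2),
                    Finset.card_insert_of_notMem hky] at hcard
                  omega
                · -- y outside both : swap in both
                  have W' := (W.swap₁ ha₁.1 hv.symm hw1.symm
                    (fun x hx hxa => (hadj₁ x hx hxa).symm)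
                    (fun h => hy₁ (Finset.mem_of_mem_erase h))).swap₂ hb₂.1 hv.symm hw2.symm
                    (fun x hx hxb => (hadj₂ x hx hxb).symm)
                    (fun h => hy₂ (Finset.mem_of_mem_erase h))
                  have hcard := hmax _ _ W'
                  rw [Finset.insert_inter_of_mem (Finset.mem_insert_self _ _),
                    Finset.inter_insert_of_notMem (fun h => hy₁ (Finset.mem_of_mem_erase h)),
                    Finset.erase_inter, Finset.inter_erase,
                    Finset.erase_eq_of_notMem (fun h => hbs₁ (Finset.mem_inter.mp h).1),
                    Finset.erase_eq_of_notMem (fun h => has₂ (Finset.mem_inter.mp h).2),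
                    Finset.card_insert_of_notMem hky] at hcard
                  omega
      · simp only [hv, hw1, hw2, if_pos, if_neg not_false]
        omega
    · by_cases hw2 : H.Adj w₂ y <;> simp only [hv, hw1, hw2, if_pos, if_neg not_false] <;> omega
  · have hm₁w : H.Adj w₁ y → 1 ≤ m₁ := by
      intro hw
      rcases Nat.eq_zero_or_pos m₁ with h | h
      · exact absurd (key1 w₁ s₁ W.c1w hw (hall₁ h)) not_false
      · exact h
    have hm₂w : H.Adj w₂ y → 1 ≤ m₂ := by
      intro hw
      rcases Nat.eq_zero_or_pos m₂ with h | h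
      · exact absurd (key1 w₂ s₂ W.c2w hw (hall₂ h)) not_false
      · exact h
    by_cases hw1 : H.Adj w₁ y <;> by_cases hw2 : H.Adj w₂ y <;>
      simp only [hv, hw1, hw2, if_pos, if_neg not_false] <;>
      [skip; skip; skip; skip] <;> first
      | (have := hm₁w ‹_›; have := hm₂w ‹_›; omega)
      | (have := hm₁w ‹_›; omega)
      | (have := hm₂w ‹_›; omega)
      | omega

lemma AES.sum_deg [DecidableRel H.Adj] (s : Finset (Fin n)) :
    ∑ x ∈ s, (Finset.univ.filter fun z => H.Adj x z).card
      = ∑ y : Fin n, (s.filter fun x => H.Adj x y).card := by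
  calc ∑ x ∈ s, (Finset.univ.filter fun z => H.Adj x z).card
      = ∑ x ∈ s, ∑ y : Fin n, if H.Adj x y then 1 else 0 :=
        Finset.sum_congr rfl fun x _ => Finset.card_filter _ _
    _ = ∑ y : Fin n, ∑ x ∈ s, if H.Adj x y then 1 else 0 := Finset.sum_comm
    _ = ∑ y : Fin n, (s.filter fun x => H.Adj x y).card :=
        Finset.sum_congr rfl fun y _ => (Finset.card_filter _ _).symm

lemma AES.count_bound [DecidableRel H.Adj] {v w₁ w₂ : Fin n} {s₁ s₂ : Finset (Fin n)}
    (hfree : H.CliqueFree (r + 1)) (W : AES.IsWheel H r v w₁ w₂ s₁ s₂)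
    (hmax : ∀ s₁' s₂', AES.IsWheel H r v w₁ w₂ s₁' s₂' → (s₁' ∩ s₂').card ≤ (s₁ ∩ s₂).card) :
    ∑ x ∈ s₁, (Finset.univ.filter fun z => H.Adj x z).card
      + ∑ x ∈ s₂, (Finset.univ.filter fun z => H.Adj x z).card
      + ∑ x ∈ s₁ ∩ s₂, (Finset.univ.filter fun z => H.Adj x z).card
      + (Finset.univ.filter fun z => H.Adj v z).card
      + (Finset.univ.filter fun z => H.Adj w₁ z).card
      + (Finset.univ.filter fun z => H.Adj w₂ z).card
      ≤ n * (s₁.card + s₂.card + (s₁ ∩ s₂).card) := by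
  rw [AES.sum_deg, AES.sum_deg, AES.sum_deg, Finset.card_filter, Finset.card_filter,
    Finset.card_filter, ← Finset.sum_add_distrib, ← Finset.sum_add_distrib,
    ← Finset.sum_add_distrib, ← Finset.sum_add_distrib, ← Finset.sum_add_distrib]
  have := Finset.sum_le_card_nsmul Finset.univ _ (s₁.card + s₂.card + (s₁ ∩ s₂).card)
    (fun y _ => AES.key hfree W hmax y)
  simpa [mul_comm] using this

/-- Andrásfai–Erdős–Sós: a `K_{r+1}`-free graph with all degrees greater than
`(3r-4)/(3r-1) · n` is `r`-colourable. -/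
theorem andrasfai_erdos_sos (n r : ℕ) (hr : 2 ≤ r) (G : SimpleGraph (Fin n))
    (hfree : G.CliqueFree (r + 1))
    (hdeg : ∀ v : Fin n, (3 * r - 4 : ℝ) / (3 * r - 1) * n < ((G.neighborSet v).ncard : ℝ)) :
    G.Colorable r := by
  classical
  haveI : Finite (SimpleGraph (Fin n)) :=
    Finite.of_injective (fun K => K.Adj) (fun _ _ h => SimpleGraph.ext h)
  obtain ⟨H, hGH, hm⟩ :=
    Finite.exists_le_maximal (p := fun K : SimpleGraph (Fin n) => K.CliqueFree (r + 1)) hfree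
  letI : DecidableRel H.Adj := Classical.decRel _
  have hdegH : ∀ x : Fin n,
      (3 * r - 4 : ℝ) / (3 * r - 1) * n < ((Finset.univ.filter fun z => H.Adj x z).card : ℝ) := by
    intro x
    refine lt_of_lt_of_le (hdeg x) ?_
    have hsub : G.neighborSet x ⊆ H.neighborSet x := fun z hz => hGH hz
    have h1 : (G.neighborSet x).ncard ≤ (H.neighborSet x).ncard :=
      Set.ncard_le_ncard hsub (Set.toFinite _)
    have h2 : (H.neighborSet x).ncard = (Finset.univ.filter fun z => H.Adj x z).card := by
      rw [show H.neighborSet x = ↑(Finset.univ.filter fun z => H.Adj x z) by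
        ext z; simp [SimpleGraph.mem_neighborSet], Set.ncard_coe_finset]
    exact_mod_cast h2 ▸ h1
  suffices hH : H.Colorable r from hH.mono_left hGH
  by_cases hT : Transitive fun x y : Fin n => ¬H.Adj x y
  · exact AES.colorable_of_transitive hm.1 hT
  exfalso
  rw [Transitive] at hT
  push_neg at hT
  obtain ⟨w₁, v, w₂, h1, h2, h3⟩ := hT
  have hvw₁ : ¬H.Adj v w₁ := fun h => h1 h.symm
  have hne₁ : v ≠ w₁ := by rintro rfl; exact h2 h3
  have hne₂ : v ≠ w₂ := by rintro rfl; exact h1 h3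
  obtain ⟨s₁, hv1, hw1, c1v, c1w⟩ := AES.exists_clique_of_maximal hm hvw₁ hne₁
  obtain ⟨s₂, hv2, hw2, c2v, c2w⟩ := AES.exists_clique_of_maximal hm h2 hne₂
  have W₀ : AES.IsWheel H r v w₁ w₂ s₁ s₂ :=
    ⟨h3, hvw₁, h2, hv1, hv2, hw1, hw2, c1v, c1w, c2v, c2w⟩
  -- choose a wheel with maximal clique intersection
  let S : Finset ℕ := (Finset.range r).filter
    (fun k => ∃ t₁ t₂, AES.IsWheel H r v w₁ w₂ t₁ t₂ ∧ (t₁ ∩ t₂).card = k)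
  have hmemS : ∀ t₁ t₂, AES.IsWheel H r v w₁ w₂ t₁ t₂ → (t₁ ∩ t₂).card ∈ S := by
    intro t₁ t₂ W
    refine Finset.mem_filter.mpr ⟨Finset.mem_range.mpr ?_, t₁, t₂, W, rfl⟩
    have := W.inter_card_le hm.1
    omega
  have hS : S.Nonempty := ⟨_, hmemS _ _ W₀⟩
  obtain ⟨t₁, t₂, W, hWk⟩ := (Finset.mem_filter.mp (S.max'_mem hS)).2
  have hmax : ∀ s₁' s₂', AES.IsWheel H r v w₁ w₂ s₁' s₂' → (s₁' ∩ s₂').card ≤ (t₁ ∩ t₂).card := by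
    intro s₁' s₂' W'
    rw [hWk]
    exact S.le_max' _ (hmemS _ _ W')
  -- the counting argument
  have hub := AES.count_bound hm.1 W hmax
  set d : Fin n → ℕ := fun x => (Finset.univ.filter fun z => H.Adj x z).card with hd
  have hlbs : ∀ s : Finset (Fin n),
      (s.card : ℝ) * ((3 * r - 4 : ℝ) / (3 * r - 1) * n) ≤ ∑ x ∈ s, (d x : ℝ) := by
    intro s
    have := Finset.card_nsmul_le_sum s (fun x => (d x : ℝ)) ((3 * r - 4 : ℝ) / (3 * r - 1) * n)
      (fun x _ => (hdegH x).le)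
    simpa [nsmul_eq_mul] using this
  set C : ℝ := (3 * r - 4 : ℝ) / (3 * r - 1) with hC
  set P : ℕ := t₁.card with hP
  set Q : ℕ := t₂.card with hQ
  set K : ℕ := (t₁ ∩ t₂).card with hK
  have hPr : (P : ℝ) + 1 = r := by exact_mod_cast W.card₁
  have hQr : (Q : ℝ) + 1 = r := by exact_mod_cast W.card₂
  have hKr : (K : ℝ) + 2 ≤ r := by exact_mod_cast W.inter_card_le hm.1
  have hr' : (2 : ℝ) ≤ r := by exact_mod_cast hr
  have h3pos : (0 : ℝ) < 3 * r - 1 := by linarith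
  have hCineq : ((P : ℝ) + Q + K) ≤ ((P : ℝ) + Q + K + 3) * C := by
    rw [hC, mul_div_assoc', le_div_iff₀ h3pos]
    nlinarith [hKr, hPr, hQr]
  -- real versions of the sums
  have hS₁ := hlbs t₁
  have hS₂ := hlbs t₂
  have hS₀ := hlbs (t₁ ∩ t₂)
  have hdv := hdegH v
  have hdw₁ := hdegH w₁
  have hdw₂ := hdegH w₂
  have hub' : (∑ x ∈ t₁, (d x : ℝ)) + (∑ x ∈ t₂, (d x : ℝ)) + (∑ x ∈ t₁ ∩ t₂, (d x : ℝ))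
      + (d v : ℝ) + (d w₁ : ℝ) + (d w₂ : ℝ) ≤ (n : ℝ) * ((P : ℝ) + Q + K) := by
    push_cast [← Nat.cast_sum]
    exact_mod_cast hub
  have hn0 : (0 : ℝ) ≤ n := Nat.cast_nonneg n
  have hlarge : ((P : ℝ) + Q + K + 3) * (C * n) <
      (∑ x ∈ t₁, (d x : ℝ)) + (∑ x ∈ t₂, (d x : ℝ)) + (∑ x ∈ t₁ ∩ t₂, (d x : ℝ))
      + (d v : ℝ) + (d w₁ : ℝ) + (d w₂ : ℝ) := by
    have h1 : (P : ℝ) * (C * n) ≤ ∑ x ∈ t₁, (d x : ℝ) := hS₁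
    have h2 : (Q : ℝ) * (C * n) ≤ ∑ x ∈ t₂, (d x : ℝ) := hS₂
    have h3 : (K : ℝ) * (C * n) ≤ ∑ x ∈ t₁ ∩ t₂, (d x : ℝ) := hS₀
    have h4 : C * n < (d v : ℝ) := hdv
    have h5 : C * n < (d w₁ : ℝ) := hdw₁
    have h6 : C * n < (d w₂ : ℝ) := hdw₂
    nlinarith [h1, h2, h3, h4, h5, h6]
  have hfinal : (n : ℝ) * ((P : ℝ) + Q + K) ≤ ((P : ℝ) + Q + K + 3) * (C * n) := by
    calc (n : ℝ) * ((P : ℝ) + Q + K) = ((P : ℝ) + Q + K) * n := by ring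
      _ ≤ (((P : ℝ) + Q + K + 3) * C) * n := mul_le_mul_of_nonneg_right hCineq hn0
      _ = ((P : ℝ) + Q + K + 3) * (C * n) := by ring
  linarith [hub', hlarge, hfinal]
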